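/- Let p ∈ (0,1] and θ ∈ (−π, π/2], or p ∈ (1,2] and θ ∈ (−π, 0], with (p,θ) ≠ (2,0). Then for every x ≥ θ, equality cos x = cos θ − A_{p,θ}·(x − θ)^p holds if and only if x = θ or x = φ_p(θ). -/

import Mathlib

open Real Set Filter Topology

noncomputable def fA (p θ x : ℝ) : ℝ := (Real.cos θ - Real.cos x) / (x - θ) ^ p

noncomputable def gA (p θ x : ℝ) : ℝ := p * (Real.cos x - Real.cos θ) + (x - θ) * Real.sin x

lemma ev_right_lt {F : ℝ → ℝ} {w d : ℝ} (hF : HasDerivAt F d w) (hd : d < 0) :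
    ∀ᶠ x in 𝓝[>] w, F x < F w := by
  have h1 : Tendsto (slope F w) (𝓝[≠] w) (𝓝 d) := hasDerivAt_iff_tendsto_slope.mp hF
  have h2 : ∀ᶠ x in 𝓝[≠] w, slope F w x < 0 := h1.eventually_lt_const hd
  have h3 : 𝓝[>] w ≤ 𝓝[≠] w := nhdsWithin_mono _ fun x hx => ne_of_gt hx
  filter_upwards [h3 h2, self_mem_nhdsWithin] with x hx hxw
  rw [slope_def_field] at hx
  have hxw' : 0 < x - w := sub_pos.2 hxw
  rcases div_neg_iff.mp hx with ⟨h, h'⟩ | ⟨h, h'⟩ <;> linarith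

lemma ev_left_gt {F : ℝ → ℝ} {w d : ℝ} (hF : HasDerivAt F d w) (hd : d < 0) :
    ∀ᶠ x in 𝓝[<] w, F w < F x := by
  have h1 : Tendsto (slope F w) (𝓝[≠] w) (𝓝 d) := hasDerivAt_iff_tendsto_slope.mp hF
  have h2 : ∀ᶠ x in 𝓝[≠] w, slope F w x < 0 := h1.eventually_lt_const hd
  have h3 : 𝓝[<] w ≤ 𝓝[≠] w := nhdsWithin_mono _ fun x hx => ne_of_lt hx
  filter_upwards [h3 h2, self_mem_nhdsWithin] with x hx hxw
  rw [slope_def_field] at hx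
  have hxw' : x - w < 0 := sub_neg.2 hxw
  rcases div_neg_iff.mp hx with ⟨h, h'⟩ | ⟨h, h'⟩ <;> linarith

lemma hasDerivAt_gA (p θ x : ℝ) :
    HasDerivAt (gA p θ) ((1 - p) * Real.sin x + (x - θ) * Real.cos x) x := by
  have h1 : HasDerivAt (fun y => p * (Real.cos y - Real.cos θ)) (p * (-Real.sin x)) x :=
    (((Real.hasDerivAt_cos x).sub_const _)).const_mul p
  have h2 : HasDerivAt (fun y : ℝ => (y - θ) * Real.sin y)
      (1 * Real.sin x + (x - θ) * Real.cos x) x :=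
    ((hasDerivAt_id x).sub_const θ).mul (Real.hasDerivAt_sin x)
  have := h1.add h2
  refine this.congr_deriv ?_
  ring

lemma L1 {p θ x : ℝ} (hp : 0 < p) (hp1 : 0 < θ → p ≤ 1) (hθ2 : θ ≤ π / 2)
    (hθx : θ < x) (hx0 : 0 < x) (hxπ : x < π)
    (hz : (x - θ) * Real.sin x = p * (Real.cos θ - Real.cos x)) :
    Real.sin x ^ 2 < p * (1 - Real.cos θ * Real.cos x) := by
  have hsx : 0 < Real.sin x := Real.sin_pos_of_pos_of_lt_pi hx0 hxπ
  have hu : 0 < x - θ := sub_pos.2 hθx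
  have hD : 0 < Real.cos θ - Real.cos x := by nlinarith [mul_pos hu hsx]
  rcases le_or_gt θ 0 with hθ | hθ
  · have h1 : Real.sin x < x := Real.sin_lt hx0
    have h3 : Real.cos θ - Real.cos x ≤ 1 - Real.cos θ * Real.cos x := by
      nlinarith [Real.cos_le_one θ, Real.neg_one_le_cos x]
    nlinarith [Real.sin_le_one x, mul_le_mul_of_nonneg_left h3 hp.le]
  · have hp1' := hp1 hθ
    have hcθ : 0 ≤ Real.cos θ := Real.cos_nonneg_of_mem_Icc ⟨by linarith, hθ2⟩
    have hxhalf : π / 2 < x := by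
      by_contra hle
      push_neg at hle
      obtain ⟨c, hc, hcd⟩ := exists_hasDerivAt_eq_slope Real.cos (fun y => -Real.sin y) hθx
        Real.continuous_cos.continuousOn (fun y _ => Real.hasDerivAt_cos y)
      have hsc : Real.sin c < Real.sin x := by
        apply Real.strictMonoOn_sin ⟨by linarith [hc.1], by linarith [hc.2]⟩
          ⟨by linarith, hle⟩ hc.2
      have hDc : Real.cos θ - Real.cos x = (x - θ) * Real.sin c := by
        field_simp at hcd
        nlinarith [hcd]
      nlinarith [mul_lt_mul_of_pos_left hsc hu]
    have hcx : Real.cos x < 0 := by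
      have h := Real.sin_pos_of_pos_of_lt_pi (x := x - π/2) (by linarith) (by linarith)
      rw [Real.sin_sub_pi_div_two] at h
      linarith
    have k1 : Real.sin x * (-Real.cos x) < x - π / 2 := by
      have h2x : Real.sin (2 * x - π) < 2 * x - π := Real.sin_lt (by linarith)
      rw [Real.sin_sub_pi, Real.sin_two_mul] at h2x
      nlinarith [h2x]
    have k2 : Real.sin x * Real.cos θ ≤ π / 2 - θ := by
      have hl : Real.cos θ ≤ π / 2 - θ := by
        have := Real.sin_le (x := π / 2 - θ) (by linarith)
        rwa [Real.sin_pi_div_two_sub] at this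
      nlinarith [Real.sin_le_one x, hcθ]
    have key : Real.sin x * (Real.cos θ - Real.cos x) < (x - θ) * (1 - Real.cos θ * Real.cos x) := by
      nlinarith [mul_nonneg (mul_nonneg hu.le hcθ) (neg_nonneg.2 hcx.le)]
    have key2 : Real.sin x ^ 2 * (Real.cos θ - Real.cos x)
        < p * (1 - Real.cos θ * Real.cos x) * (Real.cos θ - Real.cos x) := by
      have := mul_lt_mul_of_pos_left key hsx
      calc Real.sin x ^ 2 * (Real.cos θ - Real.cos x)
          = Real.sin x * (Real.sin x * (Real.cos θ - Real.cos x)) := by ring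
        _ < Real.sin x * ((x - θ) * (1 - Real.cos θ * Real.cos x)) := this
        _ = ((x - θ) * Real.sin x) * (1 - Real.cos θ * Real.cos x) := by ring
        _ = p * (1 - Real.cos θ * Real.cos x) * (Real.cos θ - Real.cos x) := by rw [hz]; ring
    exact lt_of_mul_lt_mul_right key2 hD.le
lemma gA_cont (p θ : ℝ) : Continuous (gA p θ) := by
  unfold gA; continuity

lemma gderiv_neg {p θ w : ℝ} (hp : 0 < p) (hp1 : 0 < θ → p ≤ 1) (hθ2 : θ ≤ π / 2)
    (hθw : θ < w) (hw0 : 0 < w) (hwπ : w < π) (hgw : gA p θ w = 0) :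
    (1 - p) * Real.sin w + (w - θ) * Real.cos w < 0 := by
  have hsw : 0 < Real.sin w := Real.sin_pos_of_pos_of_lt_pi hw0 hwπ
  have hz : (w - θ) * Real.sin w = p * (Real.cos θ - Real.cos w) := by
    unfold gA at hgw; linarith
  have hN := L1 hp hp1 hθ2 hθw hw0 hwπ hz
  have hprod : Real.sin w * ((1 - p) * Real.sin w + (w - θ) * Real.cos w) < 0 := by
    have : Real.sin w * ((1 - p) * Real.sin w + (w - θ) * Real.cos w)
        = (1 - p) * Real.sin w ^ 2 + ((w - θ) * Real.sin w) * Real.cos w := by ring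
    rw [this, hz]
    nlinarith [hN, Real.sin_sq_add_cos_sq w]
  by_contra hge
  push_neg at hge
  nlinarith [mul_nonneg hsw.le hge]

lemma lemK {p θ z : ℝ} (hp : 0 < p) (hp1 : 0 < θ → p ≤ 1) (hθ2 : θ ≤ π / 2)
    (hθz : θ < z) (hz0 : 0 < z) (hzπ : z < π) (hgz : gA p θ z ≤ 0) :
    ∀ x ∈ Ioo z π, gA p θ x < 0 := by
  by_contra hcon
  push_neg at hcon
  obtain ⟨x1, hx1, hgx1⟩ := hcon
  -- get a point x2 in (z, π) with gA > 0
  obtain ⟨x2, hx2, hgx2⟩ : ∃ x2 ∈ Ioo z π, 0 < gA p θ x2 := by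
    rcases lt_or_eq_of_le hgx1 with h | h
    · exact ⟨x1, hx1, h⟩
    · have hd := gderiv_neg hp hp1 hθ2 (lt_trans hθz hx1.1) (lt_trans hz0 hx1.1) hx1.2 h.symm
      have hev := ev_left_gt (hasDerivAt_gA p θ x1) hd
      have hev2 : Ioo z x1 ∈ 𝓝[<] x1 := Ioo_mem_nhdsLT_of_mem ⟨hx1.1, le_refl _⟩
      obtain ⟨y, hy1, hy2⟩ := (hev.and (eventually_of_mem hev2 (fun y hy => hy))).exists
      exact ⟨y, ⟨hy2.1, lt_trans hy2.2 hx1.2⟩, lt_of_le_of_lt h.le hy1⟩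
  set S : Set ℝ := Icc z x2 ∩ (gA p θ) ⁻¹' (Iic 0) with hS
  have hScomp : IsCompact S := isCompact_Icc.inter_right (isClosed_Iic.preimage (gA_cont p θ))
  have hSne : S.Nonempty := ⟨z, ⟨le_refl _, hx2.1.le⟩, hgz⟩
  have hSbdd : BddAbove S := hScomp.bddAbove
  set w := sSup S with hw
  have hwS : w ∈ S := hScomp.sSup_mem hSne
  have hgw_le : gA p θ w ≤ 0 := hwS.2
  have hwz : z ≤ w := hwS.1.1
  have hwx2 : w ≤ x2 := hwS.1.2
  have hwne : w ≠ x2 := fun h => by rw [h] at hgw_le; linarith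
  have hwlt : w < x2 := lt_of_le_of_ne hwx2 hwne
  have hpos : ∀ x ∈ Ioc w x2, 0 < gA p θ x := by
    intro x hx
    by_contra hle
    push_neg at hle
    have hxS : x ∈ S := ⟨⟨le_trans hwz hx.1.le, hx.2⟩, hle⟩
    exact absurd (le_csSup hSbdd hxS) (not_le.2 hx.1)
  have hgw_ge : 0 ≤ gA p θ w := by
    have hcont : Tendsto (gA p θ) (𝓝[>] w) (𝓝 (gA p θ w)) :=
      ((gA_cont p θ).tendsto w).mono_left nhdsWithin_le_nhds
    have hev : ∀ᶠ x in 𝓝[>] w, 0 ≤ gA p θ x := by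
      filter_upwards [Ioc_mem_nhdsGT_of_mem ⟨le_refl w, hwlt⟩] with x hx
      exact (hpos x hx).le
    exact ge_of_tendsto hcont hev
  have hgw0 : gA p θ w = 0 := le_antisymm hgw_le hgw_ge
  have hd := gderiv_neg hp hp1 hθ2 (lt_of_lt_of_le hθz hwz) (lt_of_lt_of_le hz0 hwz)
    (lt_of_lt_of_le (lt_of_lt_of_le hwlt hx2.2.le) (le_refl π)) hgw0
  have hev := ev_right_lt (hasDerivAt_gA p θ w) hd
  have hev2 : Ioc w x2 ∈ 𝓝[>] w := Ioc_mem_nhdsGT_of_mem ⟨le_refl _, hwlt⟩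
  obtain ⟨y, hy1, hy2⟩ := (hev.and (eventually_of_mem hev2 (fun y hy => hy))).exists
  have := hpos y hy2
  rw [hgw0] at hy1
  linarith
lemma hasDerivAt_fA {p θ y : ℝ} (hy : θ < y) :
    HasDerivAt (fA p θ) (gA p θ y / (y - θ) ^ (p + 1)) y := by
  have ht : 0 < y - θ := sub_pos.2 hy
  have hne : (y - θ) ^ p ≠ 0 := (Real.rpow_pos_of_pos ht p).ne'
  have hu : HasDerivAt (fun x => Real.cos θ - Real.cos x) (Real.sin y) y := by
    simpa using (Real.hasDerivAt_cos y).const_sub (Real.cos θ)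
  have hv : HasDerivAt (fun x : ℝ => (x - θ) ^ p) (1 * p * (y - θ) ^ (p - 1)) y :=
    HasDerivAt.rpow_const ((hasDerivAt_id y).sub_const θ) (Or.inl ht.ne')
  have hdiv := hu.div hv hne
  refine hdiv.congr_deriv ?_
  have e1 : (y - θ) ^ (p - 1) = (y - θ) ^ p / (y - θ) := by
    rw [Real.rpow_sub ht, Real.rpow_one]
  have e2 : (y - θ) ^ (p + 1) = (y - θ) ^ p * (y - θ) := by
    rw [Real.rpow_add ht, Real.rpow_one]
  rw [e1, e2]
  unfold gA
  field_simp
  ring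

lemma main_max {p θ φ : ℝ} (hp : 0 < p) (hp1 : 0 < θ → p ≤ 1) (hθl : -π < θ)
    (hθ2 : θ ≤ π / 2) (hφ1 : |θ| < φ) (hφ2 : φ < π) (hgφ : gA p θ φ = 0) :
    ∀ x ∈ Ioc θ π, x ≠ φ → fA p θ x < fA p θ φ := by
  have hπ : (0:ℝ) < π := Real.pi_pos
  have habs : |θ| < π := abs_lt.2 ⟨hθl, by linarith⟩
  have hφ0 : 0 < φ := lt_of_le_of_lt (abs_nonneg θ) hφ1
  have hθφ : θ < φ := lt_of_le_of_lt (le_abs_self θ) hφ1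
  have hgpos : ∀ x ∈ Ioo |θ| φ, 0 < gA p θ x := by
    intro x hx
    by_contra hle
    push_neg at hle
    have := lemK hp hp1 hθ2 (lt_of_le_of_lt (le_abs_self θ) hx.1)
      (lt_of_le_of_lt (abs_nonneg θ) hx.1) (hx.2.trans hφ2) hle φ ⟨hx.2, hφ2⟩
    linarith [hgφ ▸ this]
  have hgneg : ∀ x ∈ Ioo φ π, gA p θ x < 0 := lemK hp hp1 hθ2 hθφ hφ0 hφ2 hgφ.le
  have hcosφ : Real.cos φ < Real.cos θ := by
    rw [← Real.cos_abs θ]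
    exact Real.strictAntiOn_cos ⟨abs_nonneg θ, habs.le⟩ ⟨hφ0.le, hφ2.le⟩ hφ1
  have hfφpos : 0 < fA p θ φ :=
    div_pos (sub_pos.2 hcosφ) (Real.rpow_pos_of_pos (sub_pos.2 hθφ) p)
  have hanti : StrictAntiOn (fA p θ) (Icc φ π) := by
    apply strictAntiOn_of_deriv_neg (convex_Icc φ π)
    · exact fun y hy => (hasDerivAt_fA (lt_of_lt_of_le hθφ hy.1)).continuousAt.continuousWithinAt
    · intro y hy
      rw [interior_Icc] at hy
      rw [(hasDerivAt_fA (hθφ.trans hy.1)).deriv]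
      exact div_neg_of_neg_of_pos (hgneg y hy)
        (Real.rpow_pos_of_pos (sub_pos.2 (hθφ.trans hy.1)) _)
  intro x hx hne
  rcases le_or_gt x |θ| with hle | hgt
  · have hxabs : |x| ≤ |θ| := abs_le.2 ⟨le_of_lt (lt_of_le_of_lt (neg_abs_le θ) hx.1), hle⟩
    have : Real.cos θ ≤ Real.cos x := by
      rw [← Real.cos_abs θ, ← Real.cos_abs x]
      exact Real.strictAntiOn_cos.antitoneOn ⟨abs_nonneg x, (hxabs.trans habs.le).trans_eq rfl⟩
        ⟨abs_nonneg θ, habs.le⟩ hxabs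
    have hfx : fA p θ x ≤ 0 :=
      div_nonpos_of_nonpos_of_nonneg (by linarith)
        (Real.rpow_pos_of_pos (sub_pos.2 hx.1) p).le
    linarith
  · rcases lt_trichotomy x φ with hlt | heq | hgt2
    · have hmono : StrictMonoOn (fA p θ) (Icc x φ) := by
        apply strictMonoOn_of_deriv_pos (convex_Icc x φ)
        · exact fun y hy => (hasDerivAt_fA (lt_of_lt_of_le hx.1 hy.1)).continuousAt.continuousWithinAt
        · intro y hy
          rw [interior_Icc] at hy
          rw [(hasDerivAt_fA (hx.1.trans hy.1)).deriv]
          exact div_pos (hgpos y ⟨hgt.trans hy.1, hy.2⟩)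
            (Real.rpow_pos_of_pos (sub_pos.2 (hx.1.trans hy.1)) _)
      exact hmono ⟨le_refl x, hlt.le⟩ ⟨hlt.le, le_refl φ⟩ hlt
    · exact absurd heq hne
    · exact hanti ⟨le_refl φ, hφ2.le⟩ ⟨hgt2.le, hx.2⟩ hgt2
/-- The set of values `(cos θ - cos x)/(x - θ)^p` for `x ∈ (θ, π)`. -/
noncomputable def Aset (p θ : ℝ) : Set ℝ :=
  (fun x : ℝ => (Real.cos θ - Real.cos x) / (x - θ) ^ p) '' Set.Ioo θ Real.pi

/-- `A p θ` is the supremum of `(cos θ - cos x)/(x - θ)^p` over `x ∈ (θ, π)`. -/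
noncomputable def A (p θ : ℝ) : ℝ := sSup (Aset p θ)

/-- The parameter domain: `p ∈ (0,1]` and `θ ∈ (−π, π/2]`, or `p ∈ (1,2]` and `θ ∈ (−π, 0]`. -/
def Dom (p θ : ℝ) : Prop :=
  (p ∈ Set.Ioc (0 : ℝ) 1 ∧ θ ∈ Set.Ioc (-Real.pi) (Real.pi / 2)) ∨
  (p ∈ Set.Ioc (1 : ℝ) 2 ∧ θ ∈ Set.Ioc (-Real.pi) 0)

lemma A_eq {p θ φ : ℝ} (hp : 0 < p) (hp1 : 0 < θ → p ≤ 1) (hθl : -π < θ)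
    (hθ2 : θ ≤ π / 2) (hφ1 : |θ| < φ) (hφ2 : φ < π) (hgφ : gA p θ φ = 0) :
    A p θ = fA p θ φ := by
  have hθφ : θ < φ := lt_of_le_of_lt (le_abs_self θ) hφ1
  have hmem : fA p θ φ ∈ Aset p θ := ⟨φ, ⟨hθφ, hφ2⟩, rfl⟩
  have hub : ∀ y ∈ Aset p θ, y ≤ fA p θ φ := by
    rintro y ⟨x, hx, rfl⟩
    show fA p θ x ≤ fA p θ φ
    rcases eq_or_ne x φ with rfl | hne
    · exact le_refl _
    · exact (main_max hp hp1 hθl hθ2 hφ1 hφ2 hgφ x ⟨hx.1, hx.2.le⟩ hne).le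
  exact le_antisymm (csSup_le ⟨_, hmem⟩ hub) (le_csSup ⟨_, hub⟩ hmem)

theorem stmt3 (p θ φ : ℝ) (h : Dom p θ) (hne : (p, θ) ≠ ((2 : ℝ), (0 : ℝ)))
    (hφ : φ ∈ Set.Ioo |θ| Real.pi ∧
      p * (Real.cos φ - Real.cos θ) + (φ - θ) * Real.sin φ = 0) :
    ∀ x : ℝ, θ ≤ x →
      (Real.cos x = Real.cos θ - A p θ * (x - θ) ^ p ↔ x = θ ∨ x = φ) := by
  have hπ : (0:ℝ) < π := Real.pi_pos
  obtain ⟨hp, hp1, hθl, hθ2⟩ : 0 < p ∧ (0 < θ → p ≤ 1) ∧ -π < θ ∧ θ ≤ π / 2 := by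
    rcases h with ⟨⟨hp0, hp1⟩, hθl, hθ2⟩ | ⟨⟨hp0, hp2⟩, hθl, hθ0⟩
    · exact ⟨hp0, fun _ => hp1, hθl, hθ2⟩
    · exact ⟨by linarith, fun hθ => absurd hθ0 (by linarith), hθl, by linarith⟩
  obtain ⟨⟨hφ1, hφ2⟩, hgφeq⟩ := hφ
  have hgφ : gA p θ φ = 0 := hgφeq
  have hθφ : θ < φ := lt_of_le_of_lt (le_abs_self θ) hφ1
  have habs : |θ| < π := abs_lt.2 ⟨hθl, by linarith⟩
  have hθπ : θ < π := lt_of_le_of_lt (le_abs_self θ) habs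
  have hA : A p θ = fA p θ φ := A_eq hp hp1 hθl hθ2 hφ1 hφ2 hgφ
  have hmax := main_max hp hp1 hθl hθ2 hφ1 hφ2 hgφ
  intro x hxθ
  constructor
  · intro heq
    rcases eq_or_lt_of_le hxθ with rfl | hlt
    · exact Or.inl rfl
    right
    by_contra hxφ
    have hxp : (0:ℝ) < (x - θ) ^ p := Real.rpow_pos_of_pos (sub_pos.2 hlt) p
    have hfx : fA p θ x = fA p θ φ := by
      rw [← hA]
      unfold fA
      rw [div_eq_iff hxp.ne']
      linarith [heq]
    rcases le_or_gt x π with hxπ | hxπ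
    · exact absurd hfx (ne_of_lt (hmax x ⟨hlt, hxπ⟩ hxφ))
    · have hπφ : fA p θ π < fA p θ φ := hmax π ⟨hθπ, le_refl π⟩ (ne_of_gt hφ2)
      have hcosθ : -1 < Real.cos θ := by
        rw [← Real.cos_abs θ, ← Real.cos_pi]
        exact Real.strictAntiOn_cos ⟨abs_nonneg θ, habs.le⟩ ⟨hπ.le, le_refl π⟩ habs
      have hden : (0:ℝ) < (π - θ) ^ p := Real.rpow_pos_of_pos (sub_pos.2 hθπ) p
      have hdle : (π - θ) ^ p ≤ (x - θ) ^ p :=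
        Real.rpow_le_rpow (by linarith) (by linarith) hp.le
      have h1 : fA p θ x ≤ (Real.cos θ + 1) / (x - θ) ^ p := by
        unfold fA
        exact (div_le_div_iff_of_pos_right hxp).2 (by linarith [Real.neg_one_le_cos x])
      have h2 : (Real.cos θ + 1) / (x - θ) ^ p ≤ (Real.cos θ + 1) / (π - θ) ^ p :=
        div_le_div_of_nonneg_left (by linarith) hden hdle
      have h3 : (Real.cos θ + 1) / (π - θ) ^ p = fA p θ π := by
        unfold fA
        rw [Real.cos_pi]
        ring_nf
      linarith
  · rintro (rfl | rfl)
    · rw [sub_self, Real.zero_rpow hp.ne', mul_zero, sub_zero]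
    · rw [hA]
      unfold fA
      rw [div_mul_cancel₀ _ (Real.rpow_pos_of_pos (sub_pos.2 hθφ) p).ne']
      ring
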